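/- arXiv:2306.10674 — 2 statements merged into one kernel-verified Lean document; each statement's English description precedes it below -/
import Mathlib

section
/- Let β, κ > 0 and let E, B ∈ ℝ³ satisfy the Born–Infeld constitutive equation D = (E + κ²(E·B)B)/√(1 − 2βs) with s = (‖E‖² − ‖B‖²)/2 + (κ²/2)(E·B)². Then ‖E‖² = (1 + β‖B‖²)(‖D‖² + κ²(2 + κ²‖B‖²)‖B × D‖²) / ((1 + κ²‖B‖²)(1 + β‖D‖² + κ²‖B‖² + βκ²‖B × D‖²)) and (E·B)² = (B·D)²(1 + β‖B‖²) / ((1 + κ²‖B‖²)(1 + β‖D‖² + κ²‖B‖² + βκ²‖B × D‖²)). -/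
noncomputable section

abbrev V3 := Fin 3 → ℝ

def dot (a b : V3) : ℝ := ∑ i, a i * b i

lemma dot_self_nonneg (v : V3) : 0 ≤ dot v v :=
  Finset.sum_nonneg fun i _ => mul_self_nonneg _

lemma dot_DD_aux (κ r : ℝ) (hrne : r ≠ 0) (E B D : V3)
    (hD : D = r⁻¹ • (E + (κ ^ 2 * dot E B) • B)) :
    dot D D = (dot E E + κ ^ 2 * (dot E B) ^ 2 * (2 + κ ^ 2 * dot B B)) / r ^ 2 := by
  subst hD
  simp only [dot, Fin.sum_univ_three, Pi.smul_apply, Pi.add_apply, smul_eq_mul]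
  field_simp
  ring

lemma dot_BD_aux (κ r : ℝ) (hrne : r ≠ 0) (E B D : V3)
    (hD : D = r⁻¹ • (E + (κ ^ 2 * dot E B) • B)) :
    dot B D = (dot E B) * (1 + κ ^ 2 * dot B B) / r := by
  subst hD
  simp only [dot, Fin.sum_univ_three, Pi.smul_apply, Pi.add_apply, smul_eq_mul]
  field_simp
  ring

lemma lagrange_aux (B D : V3) : dot (crossProduct B D) (crossProduct B D)
    = dot B B * dot D D - (dot B D) ^ 2 := by
  simp only [dot, cross_apply, Fin.sum_univ_three, Matrix.cons_val_zero,
    Matrix.cons_val_one, Matrix.head_cons, Matrix.cons_val_two, Matrix.tail_cons]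
  ring

theorem BI_dyonic_E_sq (β κ : ℝ) (hβ : 0 < β) (hκ : 0 < κ) (E B D : V3)
    (s : ℝ) (hs : s = (dot E E - dot B B) / 2 + κ ^ 2 / 2 * (dot E B) ^ 2)
    (hpos : 0 < 1 - 2 * β * s)
    (hD : D = (Real.sqrt (1 - 2 * β * s))⁻¹ • (E + (κ ^ 2 * dot E B) • B)) :
    dot E E = (1 + β * dot B B)
        * (dot D D + κ ^ 2 * (2 + κ ^ 2 * dot B B) * dot (crossProduct B D) (crossProduct B D))
      / ((1 + κ ^ 2 * dot B B)
        * (1 + β * dot D D + κ ^ 2 * dot B B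
            + β * κ ^ 2 * dot (crossProduct B D) (crossProduct B D))) ∧
    (dot E B) ^ 2 = (dot B D) ^ 2 * (1 + β * dot B B)
      / ((1 + κ ^ 2 * dot B B)
        * (1 + β * dot D D + κ ^ 2 * dot B B
            + β * κ ^ 2 * dot (crossProduct B D) (crossProduct B D))) := by
  set r := Real.sqrt (1 - 2 * β * s) with hr
  have hrpos : 0 < r := Real.sqrt_pos.mpr hpos
  have hr2 : r ^ 2 = 1 - 2 * β * s := Real.sq_sqrt hpos.le
  have hrne : r ≠ 0 := hrpos.ne'
  have hDD := dot_DD_aux κ r hrne E B D hD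
  have hBD := dot_BD_aux κ r hrne E B D hD
  have hX := lagrange_aux B D
  have hb : 0 ≤ dot B B := dot_self_nonneg B
  have hA : (0:ℝ) < 1 + κ ^ 2 * dot B B := by positivity
  have hBb : (0:ℝ) < 1 + β * dot B B := by positivity
  have hr2' : r ^ 2 = 1 - β * dot E E + β * dot B B - β * κ ^ 2 * (dot E B) ^ 2 := by
    rw [hr2, hs]; ring
  have hTval : 1 + β * dot D D + κ ^ 2 * dot B B
      + β * κ ^ 2 * dot (crossProduct B D) (crossProduct B D)
      = (1 + κ ^ 2 * dot B B) * (1 + β * dot B B) / r ^ 2 := by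
    rw [hX, hDD, hBD]
    field_simp
    linear_combination (1 + κ ^ 2 * dot B B) * hr2'
  constructor
  · rw [hTval, hX, hDD, hBD]
    field_simp
    ring
  · rw [hTval, hBD]
    field_simp
end
end

section
/- Let β, κ > 0 and D, B ∈ ℝ³. Define E = √(1+β‖B‖²)((1+κ²‖B‖²)D − κ²(B·D)B) / (√(1+κ²‖B‖²)·√(1 + β‖D‖² + κ²‖B‖² + βκ²‖B×D‖²)). Then E satisfies the dyonic Born–Infeld constitutive equation D = (E + κ²(E·B)B)/√(1 − 2βs) with s = (‖E‖² − ‖B‖²)/2 + (κ²/2)(E·B)², and moreover 1 − 2βs = (1+β‖B‖²)(1+κ²‖B‖²)/(1 + β‖D‖² + κ²‖B‖² + βκ²‖B×D‖²) > 0. -/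
noncomputable section

private lemma aux_key (β κ b d p x c s : ℝ)
    (hX : x = b * d - p ^ 2)
    (hK0 : (1 + κ ^ 2 * b) ≠ 0)
    (hQ0 : (1 + β * d + κ ^ 2 * b + β * κ ^ 2 * x) ≠ 0)
    (hc2 : c ^ 2 = (1 + β * b) / ((1 + κ ^ 2 * b) * (1 + β * d + κ ^ 2 * b + β * κ ^ 2 * x)))
    (hs : s = (c ^ 2 * ((1 + κ ^ 2 * b) ^ 2 * d - κ ^ 2 * (2 + κ ^ 2 * b) * p ^ 2) - b) / 2
        + κ ^ 2 / 2 * (c ^ 2 * p ^ 2)) :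
    1 - 2 * β * s = (1 + β * b) * (1 + κ ^ 2 * b)
      / (1 + β * d + κ ^ 2 * b + β * κ ^ 2 * x) := by
  subst hX hs
  have h2 : c ^ 2 * ((1 + κ ^ 2 * b) * (1 + β * d + κ ^ 2 * b + β * κ ^ 2 * (b * d - p ^ 2)))
      = 1 + β * b := by
    rw [hc2]; exact div_mul_cancel₀ _ (mul_ne_zero hK0 hQ0)
  rw [eq_div_iff hQ0]
  linear_combination (-β * ((1 + κ ^ 2 * b) * d - κ ^ 2 * p ^ 2)) * h2

theorem BI_dyonic_E_formula (β κ : ℝ) (hβ : 0 < β) (hκ : 0 < κ) (D B : V3)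
    (E : V3)
    (hE : E = (Real.sqrt (1 + β * dot B B)
        / (Real.sqrt (1 + κ ^ 2 * dot B B)
          * Real.sqrt (1 + β * dot D D + κ ^ 2 * dot B B
              + β * κ ^ 2 * dot (crossProduct B D) (crossProduct B D))))
      • ((1 + κ ^ 2 * dot B B) • D - (κ ^ 2 * dot B D) • B))
    (s : ℝ) (hs : s = (dot E E - dot B B) / 2 + κ ^ 2 / 2 * (dot E B) ^ 2) :
    1 - 2 * β * s = (1 + β * dot B B) * (1 + κ ^ 2 * dot B B)
      / (1 + β * dot D D + κ ^ 2 * dot B B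
          + β * κ ^ 2 * dot (crossProduct B D) (crossProduct B D)) ∧
    0 < 1 - 2 * β * s ∧
    D = (Real.sqrt (1 - 2 * β * s))⁻¹ • (E + (κ ^ 2 * dot E B) • B) := by
  have hnn : ∀ x : V3, 0 ≤ dot x x := fun x =>
    Finset.sum_nonneg fun i _ => mul_self_nonneg _
  have hX : dot (crossProduct B D) (crossProduct B D)
      = dot B B * dot D D - (dot B D) ^ 2 := by
    simp only [dot, cross_apply, Fin.sum_univ_three, Matrix.cons_val_zero,
      Matrix.cons_val_one, Matrix.head_cons, Matrix.cons_val_two, Matrix.tail_cons]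
    ring
  have hbn := hnn B
  have hdn := hnn D
  have hxn := hnn (crossProduct B D)
  have hA0 : 0 < 1 + β * dot B B := by nlinarith
  have hK0 : 0 < 1 + κ ^ 2 * dot B B := by nlinarith [mul_nonneg (sq_nonneg κ) hbn]
  have hQ0 : 0 < 1 + β * dot D D + κ ^ 2 * dot B B
      + β * κ ^ 2 * dot (crossProduct B D) (crossProduct B D) := by
    nlinarith [mul_nonneg hβ.le hdn, mul_nonneg (sq_nonneg κ) hbn,
      mul_nonneg (mul_nonneg hβ.le (sq_nonneg κ)) hxn]
  obtain ⟨c, hc⟩ : ∃ c : ℝ, c = Real.sqrt (1 + β * dot B B)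
      / (Real.sqrt (1 + κ ^ 2 * dot B B)
        * Real.sqrt (1 + β * dot D D + κ ^ 2 * dot B B
            + β * κ ^ 2 * dot (crossProduct B D) (crossProduct B D))) := ⟨_, rfl⟩
  rw [← hc] at hE
  have hc2 : c ^ 2 = (1 + β * dot B B) / ((1 + κ ^ 2 * dot B B)
      * (1 + β * dot D D + κ ^ 2 * dot B B
          + β * κ ^ 2 * dot (crossProduct B D) (crossProduct B D))) := by
    rw [hc, div_pow, mul_pow, Real.sq_sqrt hA0.le, Real.sq_sqrt hK0.le,
      Real.sq_sqrt hQ0.le]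
  have hEB : dot E B = c * dot B D := by
    rw [hE]
    simp only [dot, Fin.sum_univ_three, Pi.smul_apply, Pi.sub_apply, smul_eq_mul]
    ring
  have hEE : dot E E = c ^ 2 * ((1 + κ ^ 2 * dot B B) ^ 2 * dot D D
      - κ ^ 2 * (2 + κ ^ 2 * dot B B) * (dot B D) ^ 2) := by
    rw [hE]
    simp only [dot, Fin.sum_univ_three, Pi.smul_apply, Pi.sub_apply, smul_eq_mul]
    ring
  have key : 1 - 2 * β * s = (1 + β * dot B B) * (1 + κ ^ 2 * dot B B)
      / (1 + β * dot D D + κ ^ 2 * dot B B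
          + β * κ ^ 2 * dot (crossProduct B D) (crossProduct B D)) :=
    aux_key β κ (dot B B) (dot D D) (dot B D) _ c s hX hK0.ne' hQ0.ne' hc2
      (by rw [hs, hEE, hEB, mul_pow])
  refine ⟨key, by rw [key]; exact div_pos (mul_pos hA0 hK0) hQ0, ?_⟩
  have hsum : E + (κ ^ 2 * dot E B) • B = (c * (1 + κ ^ 2 * dot B B)) • D := by
    rw [hEB, hE]
    funext i
    simp only [Pi.add_apply, Pi.smul_apply, Pi.sub_apply, smul_eq_mul]
    ring
  have hsplit : Real.sqrt ((1 + β * dot B B) * (1 + κ ^ 2 * dot B B)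
      / (1 + β * dot D D + κ ^ 2 * dot B B
          + β * κ ^ 2 * dot (crossProduct B D) (crossProduct B D)))
      = Real.sqrt (1 + β * dot B B) * Real.sqrt (1 + κ ^ 2 * dot B B)
        / Real.sqrt (1 + β * dot D D + κ ^ 2 * dot B B
            + β * κ ^ 2 * dot (crossProduct B D) (crossProduct B D)) := by
    rw [Real.sqrt_div (by positivity), Real.sqrt_mul hA0.le]
  have hsA0 : 0 < Real.sqrt (1 + β * dot B B) := Real.sqrt_pos.2 hA0
  have hsK0 : 0 < Real.sqrt (1 + κ ^ 2 * dot B B) := Real.sqrt_pos.2 hK0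
  have hsQ0 : 0 < Real.sqrt (1 + β * dot D D + κ ^ 2 * dot B B
      + β * κ ^ 2 * dot (crossProduct B D) (crossProduct B D)) := Real.sqrt_pos.2 hQ0
  have hscal : (Real.sqrt ((1 + β * dot B B) * (1 + κ ^ 2 * dot B B)
      / (1 + β * dot D D + κ ^ 2 * dot B B
          + β * κ ^ 2 * dot (crossProduct B D) (crossProduct B D))))⁻¹
      * (c * (1 + κ ^ 2 * dot B B)) = 1 := by
    rw [hsplit, hc]
    field_simp
    linear_combination (-1 : ℝ) * Real.sq_sqrt
      (show (0 : ℝ) ≤ 1 + dot B B * κ ^ 2 by linarith [mul_comm (dot B B) (κ ^ 2)])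
  rw [key, hsum, smul_smul, hscal, one_smul]
end
end
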